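/- Let u and v be words of the same type with the same sets of linear and non-linear variables. Let Θ be a substitution from variables to nonempty words such that whenever Θ(x) contains more than one distinct variable, x is linear in u. Then Θ(u) and Θ(v) are of the same type. -/

import Mathlib

/-- Two words have the same type: equal up to changing the positive exponents of
their maximal single-letter blocks. -/
def SameType {α : Type*} (u v : List α) : Prop :=
  ∃ L : List (α × ℕ × ℕ),
    (∀ p ∈ L, 0 < p.2.1 ∧ 0 < p.2.2) ∧
    List.Chain' (fun p q => p.1 ≠ q.1) L ∧
    u = L.flatMap (fun p => List.replicate p.2.1 p.1) ∧
    v = L.flatMap (fun p => List.replicate p.2.2 p.1)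

/-- The height of a word: the number of islands (maximal one-letter power factors). -/
def height {α : Type*} [DecidableEq α] (u : List α) : ℕ :=
  (u.destutter (· ≠ ·)).length

/-- A monoid M satisfies the identity u ≈ v (words in countably many variables). -/
def SatM (M : Type*) [Monoid M] (u v : List ℕ) : Prop :=
  ∀ θ : ℕ → M, (u.map θ).prod = (v.map θ).prod

/-- Property (C_ℓ): every word over a two-letter alphabet {x,y} of height at most ℓ
can form an identity of M only with a word of the same type. -/
def PropC (M : Type*) [Monoid M] (ℓ : ℕ) : Prop :=
  ∀ x y : ℕ, x ≠ y → ∀ u v : List ℕ, u ≠ [] → (∀ z ∈ u, z = x ∨ z = y) →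
    height u ≤ ℓ → SatM M u v → SameType u v

lemma sameType_consBlock {α : Type*} {u v : List α} (h : SameType u v)
    (c : α) {a b : ℕ} (ha : 0 < a) (hb : 0 < b) :
    SameType (List.replicate a c ++ u) (List.replicate b c ++ v) := by
  obtain ⟨L, hpos, hch, hu, hv⟩ := h
  match L, hpos, hch, hu, hv with
  | [], _, _, hu, hv =>
    exact ⟨[(c,a,b)], by simp [ha, hb], List.isChain_singleton _, by simp [hu], by simp [hv]⟩
  | (d,p,q)::L', hpos, hch, hu, hv =>
    by_cases hcd : c = d
    · subst hcd
      refine ⟨(c, a+p, b+q)::L', ?_, ?_, ?_, ?_⟩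
      · intro r hr
        rcases List.mem_cons.mp hr with h1 | h1
        · subst h1
          have := hpos (c,p,q) (by simp)
          constructor <;> simp <;> omega
        · exact hpos r (by simp [h1])
      · rcases List.isChain_cons.mp hch with ⟨h1, h2⟩
        exact List.isChain_cons.mpr ⟨h1, h2⟩
      · simp only [hu, List.flatMap_cons, List.replicate_add, List.append_assoc]
      · simp only [hv, List.flatMap_cons, List.replicate_add, List.append_assoc]
    · refine ⟨(c,a,b)::(d,p,q)::L', ?_, ?_, by simp [hu], by simp [hv]⟩
      · intro r hr
        rcases List.mem_cons.mp hr with h1 | h1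
        · subst h1; exact ⟨ha, hb⟩
        · exact hpos r h1
      · exact List.isChain_cons_cons.mpr ⟨hcd, hch⟩

lemma sameType_refl {α : Type*} (w : List α) : SameType w w := by
  induction w with
  | nil => exact ⟨[], by simp, List.isChain_nil, by simp, by simp⟩
  | cons c w ih =>
    have := sameType_consBlock ih c (a := 1) (b := 1) one_pos one_pos
    simpa using this

lemma sameType_append {α : Type*} {u v u' v' : List α} (h : SameType u v)
    (h' : SameType u' v') : SameType (u ++ u') (v ++ v') := by
  obtain ⟨L, hpos, hch, hu, hv⟩ := h
  subst hu hv
  induction L with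
  | nil => simpa using h'
  | cons p L ih =>
    have IH := ih (fun r hr => hpos r (by simp [hr])) hch.tail
    have := sameType_consBlock IH p.1 (hpos p (by simp)).1 (hpos p (by simp)).2
    simpa [List.flatMap_cons, List.append_assoc] using this

lemma sameType_flatMap {α β : Type*} (L : List α) (f g : α → List β)
    (h : ∀ p ∈ L, SameType (f p) (g p)) :
    SameType (L.flatMap f) (L.flatMap g) := by
  induction L with
  | nil => exact ⟨[], by simp, List.isChain_nil, by simp, by simp⟩
  | cons p L ih =>
    simpa [List.flatMap_cons] using
      sameType_append (h p (by simp)) (ih (fun r hr => h r (by simp [hr])))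

lemma sameType_replicate {α : Type*} (d : α) {m n : ℕ} (hm : 0 < m) (hn : 0 < n) :
    SameType (List.replicate m d) (List.replicate n d) :=
  ⟨[(d,m,n)], by simp [hm, hn], List.isChain_singleton _, by simp, by simp⟩

lemma flatMap_replicate_single {α β : Type*} (Θ : α → List β) (c : α) (d : β) (k : ℕ)
    (hk : Θ c = List.replicate k d) (a : ℕ) :
    (List.replicate a c).flatMap Θ = List.replicate (a * k) d := by
  induction a with
  | zero => simp
  | succ a ih =>
    rw [List.replicate_succ, List.flatMap_cons, ih, hk, ← List.replicate_add]
    ring_nf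

/-- Let u and v be words of the same type with the same linear and non-linear
variables, and Θ a substitution into nonempty words such that any variable of u
whose image contains more than one distinct variable is linear in u.  Then Θ(u) and
Θ(v) are of the same type. -/
theorem stmt13 (u v : List ℕ) (hst : SameType u v)
    (hlin : ∀ x, u.count x = 1 ↔ v.count x = 1)
    (hnon : ∀ x, 2 ≤ u.count x ↔ 2 ≤ v.count x)
    (Θ : ℕ → List ℕ) (hne : ∀ x, Θ x ≠ [])
    (hstar : ∀ x ∈ u, 2 ≤ (Θ x).toFinset.card → u.count x = 1) :
    SameType (u.flatMap Θ) (v.flatMap Θ) := by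
  obtain ⟨L, hpos, hch, hu, hv⟩ := hst
  have hassoc : ∀ (w : List (ℕ × ℕ × ℕ)) (f : ℕ × ℕ × ℕ → List ℕ),
      (w.flatMap f).flatMap Θ = w.flatMap (fun p => (f p).flatMap Θ) := by
    intro w f
    induction w with
    | nil => simp
    | cons p w ih => simp [List.flatMap_cons, ih]
  rw [hu, hv, hassoc, hassoc]
  apply sameType_flatMap
  rintro ⟨c, a, b⟩ hp
  obtain ⟨ha, hb⟩ := hpos _ hp
  simp only at ha hb
  obtain ⟨L1, L2, hL⟩ := List.append_of_mem hp
  have hcu : a ≤ u.count c := by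
    rw [hu, hL]
    simp [List.count_append, List.count_replicate_self]
    omega
  have hcv : b ≤ v.count c := by
    rw [hv, hL]
    simp [List.count_append, List.count_replicate_self]
    omega
  have hcmem : c ∈ u := by
    rw [← List.count_pos_iff]; omega
  by_cases hcard : 2 ≤ (Θ c).toFinset.card
  · have h1 : u.count c = 1 := hstar c hcmem hcard
    have h2 : v.count c = 1 := (hlin c).mp h1
    have ha1 : a = 1 := by omega
    have hb1 : b = 1 := by omega
    subst ha1 hb1
    exact sameType_refl _
  · obtain ⟨d, hd⟩ : ∃ d, (Θ c).toFinset = {d} := by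
      apply Finset.card_eq_one.mp
      have : 0 < (Θ c).toFinset.card := by
        rw [Finset.card_pos, List.toFinset_nonempty_iff]
        exact hne c
      omega
    have hrep : Θ c = List.replicate (Θ c).length d := by
      apply List.eq_replicate_of_mem
      intro x hx
      have : x ∈ (Θ c).toFinset := List.mem_toFinset.mpr hx
      rw [hd] at this
      simpa using this
    have hk : 0 < (Θ c).length := List.length_pos_iff.mpr (hne c)
    simp only []
    rw [flatMap_replicate_single Θ c d _ hrep, flatMap_replicate_single Θ c d _ hrep]
    exact sameType_replicate d (by positivity) (by positivity)
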